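/- (Welch bound / frame potential lower bound) For unit vectors u₁,…,u_M in ℝ^d with M ≥ d, the frame potential ∑_{i=1}^M ∑_{j=1}^M (⟨u_i, u_j⟩)² is at least M²/d. -/

import Mathlib

open Finset
open scoped RealInnerProductSpace

/-- Welch bound: for M ≥ d unit vectors in ℝ^d, the frame potential
∑_i ∑_j ⟨u_i, u_j⟩² is at least M²/d. -/
theorem welch_bound {d M : ℕ} (hd : 0 < d) (hMd : d ≤ M)
    (u : Fin M → EuclideanSpace ℝ (Fin d)) (hu : ∀ i, ‖u i‖ = 1) :
    (M : ℝ) ^ 2 / d ≤ ∑ i, ∑ j, (⟪u i, u j⟫ : ℝ) ^ 2 := by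
  set A : Fin d → Fin d → ℝ := fun k l => ∑ i, u i k * u i l with hA
  have key : ∑ i, ∑ j, (⟪u i, u j⟫ : ℝ) ^ 2 = ∑ k, ∑ l, (A k l) ^ 2 := by
    simp only [hA, PiLp.inner_apply, RCLike.inner_apply, starRingEnd_apply, star_trivial, sq,
      Finset.sum_mul_sum]
    have swap4 : ∀ f : Fin M → Fin M → Fin d → Fin d → ℝ,
        (∑ i, ∑ j, ∑ k, ∑ l, f i j k l) = ∑ k, ∑ l, ∑ i, ∑ j, f i j k l := by
      intro f
      conv_lhs => enter [2, i]; rw [Finset.sum_comm]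
      rw [Finset.sum_comm]
      conv_lhs => enter [2, k, 2, i]; rw [Finset.sum_comm]
      conv_lhs => enter [2, k]; rw [Finset.sum_comm]
    rw [swap4 fun i j k l => (u j k * u i k) * (u j l * u i l)]
    refine Finset.sum_congr rfl fun k _ => Finset.sum_congr rfl fun l _ =>
      Finset.sum_congr rfl fun i _ => Finset.sum_congr rfl fun j _ => by ring
  have trace : ∑ k, A k k = M := by
    rw [Finset.sum_comm]
    have : ∀ i : Fin M, ∑ k, u i k * u i k = 1 := by
      intro i
      have h := hu i
      rw [EuclideanSpace.norm_eq] at h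
      simp only [Real.norm_eq_abs, sq_abs] at h
      have : ∑ k, u i k ^ 2 = 1 := by
        have hnn : 0 ≤ ∑ k, u i k ^ 2 := by positivity
        nlinarith [Real.sq_sqrt hnn, Real.sqrt_nonneg (∑ k : Fin d, u i k ^ 2)]
      simpa [sq] using this
    simp [this]
  have h1 : ∑ k, (A k k) ^ 2 ≤ ∑ k, ∑ l, (A k l) ^ 2 := by
    apply Finset.sum_le_sum
    intro k _
    exact Finset.single_le_sum (f := fun l => A k l ^ 2) (fun l _ => sq_nonneg _) (Finset.mem_univ k)
  have h2 : (M : ℝ) ^ 2 ≤ d * ∑ k, (A k k) ^ 2 := by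
    have := sq_sum_le_card_mul_sum_sq (s := Finset.univ) (f := fun k : Fin d => A k k)
    simpa [trace] using this
  rw [key, div_le_iff₀ (by positivity)]
  nlinarith [h1, h2, (Nat.cast_pos (α := ℝ)).mpr hd]
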